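/- Let g be a 6-dimensional Lie algebra with complex structure in Family I (dω¹ = dω² = 0, dω³ = ρ ω¹² + ω^{1 1̄} + λ ω^{1 2̄} + D ω^{2 2̄}) with λ ≠ 0, admitting a balanced metric 2F = i(ω^{1 1̄} + s² ω^{2 2̄} + t² ω^{3 3̄}) + u ω^{1 2̄} − ū ω^{2 1̄} with s² > |u|² and s² + D = i λ ū. If furthermore |D| + Re D ≠ λ²/2, then the (2,2)-form γ = (λ s² − 2 Im(Du))(ω^{13 2̄3̄} + ω^{23 1̄3̄} + λ ω^{23 2̄3̄}) − (λ − 2 Im u)(λ ω^{13 1̄3̄} + D̄ ω^{13 2̄3̄} + D ω^{23 1̄3̄}) is nonzero. -/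

import Mathlib

/- STATEMENT 13.  Exterior-algebra model of a 6-dimensional Lie algebra with a Family I complex
structure with λ ≠ 0 admitting a balanced metric 2F = i(ω^{1 1̄} + s²ω^{2 2̄} + t²ω^{3 3̄})
+ u ω^{1 2̄} − ū ω^{2 1̄}, with s² > |u|² and s² + D = iλū.  If moreover |D| + Re D ≠ λ²/2, then
the (2,2)-form γ = (λs² − 2 Im(Du))(ω^{13 2̄3̄} + ω^{23 1̄3̄} + λ ω^{23 2̄3̄})
− (λ − 2 Im u)(λ ω^{13 1̄3̄} + D̄ ω^{13 2̄3̄} + D ω^{23 1̄3̄}) is nonzero. -/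

noncomputable section

open Submodule LinearMap

abbrev E : Type := ExteriorAlgebra ℂ (Fin 6 → ℂ)

def ω (i : Fin 3) : E := ExteriorAlgebra.ι ℂ (Pi.single (⟨i.1, by omega⟩ : Fin 6) (1 : ℂ))
def ωb (i : Fin 3) : E := ExteriorAlgebra.ι ℂ (Pi.single (⟨i.1 + 3, by omega⟩ : Fin 6) (1 : ℂ))

def IsAntider (d : E →ₗ[ℂ] E) : Prop :=
  d 1 = 0 ∧ ∀ (v : Fin 6 → ℂ) (y : E),
    d (ExteriorAlgebra.ι ℂ v * y) =
      d (ExteriorAlgebra.ι ℂ v) * y - ExteriorAlgebra.ι ℂ v * d y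

def φ (S : Fin 4 → Fin 6) : E →ₗ[ℂ] ℂ :=
  ExteriorAlgebra.liftAlternating (Function.update (fun _ => 0) 4
    ((Matrix.detRowAlternating : ((Fin 4 → ℂ)) [⋀^Fin 4]→ₗ[ℂ] ℂ).compLinearMap
      (LinearMap.funLeft ℂ ℂ S)))

lemma phi_mono (S : Fin 4 → Fin 6) (v : Fin 4 → (Fin 6 → ℂ)) :
    φ S (ExteriorAlgebra.ι ℂ (v 0) * ExteriorAlgebra.ι ℂ (v 1) *
      ExteriorAlgebra.ι ℂ (v 2) * ExteriorAlgebra.ι ℂ (v 3)) =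
    Matrix.det (Matrix.of fun j k => v j (S k)) := by
  have h : ExteriorAlgebra.ι ℂ (v 0) * ExteriorAlgebra.ι ℂ (v 1) *
      ExteriorAlgebra.ι ℂ (v 2) * ExteriorAlgebra.ι ℂ (v 3) =
      ExteriorAlgebra.ιMulti ℂ 4 v := by
    simp [ExteriorAlgebra.ιMulti_apply, List.ofFn_succ, mul_assoc, Matrix.vecTail,
      Function.comp, show (Fin.succ 2 : Fin 4) = 3 from rfl]
  rw [h, φ, ExteriorAlgebra.liftAlternating_apply_ιMulti, Function.update_self]
  rfl

lemma phi_idx (S : Fin 4 → Fin 6) (T : Fin 4 → Fin 6) :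
    φ S (ExteriorAlgebra.ι ℂ (Pi.single (T 0) 1) * ExteriorAlgebra.ι ℂ (Pi.single (T 1) 1) *
      ExteriorAlgebra.ι ℂ (Pi.single (T 2) 1) * ExteriorAlgebra.ι ℂ (Pi.single (T 3) 1)) =
    Matrix.det (Matrix.of fun j k => if S k = T j then (1:ℂ) else 0) := by
  have := phi_mono S (fun j => Pi.single (T j) 1)
  simpa [Pi.single_apply] using this

lemma pm00 (S : Fin 4 → Fin 6) : φ S (ω 0 * ω 2 * ωb 0 * ωb 2) =
    Matrix.det (Matrix.of fun j k => if S k = (![0,2,3,5] : Fin 4 → Fin 6) j then (1:ℂ) else 0) := by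
  have := phi_idx S ![0,2,3,5]; simpa [ω, ωb] using this
lemma pm01 (S : Fin 4 → Fin 6) : φ S (ω 0 * ω 2 * ωb 1 * ωb 2) =
    Matrix.det (Matrix.of fun j k => if S k = (![0,2,4,5] : Fin 4 → Fin 6) j then (1:ℂ) else 0) := by
  have := phi_idx S ![0,2,4,5]; simpa [ω, ωb] using this
lemma pm10 (S : Fin 4 → Fin 6) : φ S (ω 1 * ω 2 * ωb 0 * ωb 2) =
    Matrix.det (Matrix.of fun j k => if S k = (![1,2,3,5] : Fin 4 → Fin 6) j then (1:ℂ) else 0) := by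
  have := phi_idx S ![1,2,3,5]; simpa [ω, ωb] using this
lemma pm11 (S : Fin 4 → Fin 6) : φ S (ω 1 * ω 2 * ωb 1 * ωb 2) =
    Matrix.det (Matrix.of fun j k => if S k = (![1,2,4,5] : Fin 4 → Fin 6) j then (1:ℂ) else 0) := by
  have := phi_idx S ![1,2,4,5]; simpa [ω, ωb] using this

lemma v00_00 : φ (![0,2,3,5]) (ω 0 * ω 2 * ωb 0 * ωb 2) = 1 := by
  rw [pm00]; simp [Matrix.det_succ_row_zero, Fin.sum_univ_succ]

lemma v00_01 : φ (![0,2,3,5]) (ω 0 * ω 2 * ωb 1 * ωb 2) = 0 := by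
  rw [pm01]; simp [Matrix.det_succ_row_zero, Fin.sum_univ_succ]

lemma v00_10 : φ (![0,2,3,5]) (ω 1 * ω 2 * ωb 0 * ωb 2) = 0 := by
  rw [pm10]; simp [Matrix.det_succ_row_zero, Fin.sum_univ_succ]

lemma v00_11 : φ (![0,2,3,5]) (ω 1 * ω 2 * ωb 1 * ωb 2) = 0 := by
  rw [pm11]; simp [Matrix.det_succ_row_zero, Fin.sum_univ_succ]

lemma v11_00 : φ (![1,2,4,5]) (ω 0 * ω 2 * ωb 0 * ωb 2) = 0 := by
  rw [pm00]; simp [Matrix.det_succ_row_zero, Fin.sum_univ_succ]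

lemma v11_01 : φ (![1,2,4,5]) (ω 0 * ω 2 * ωb 1 * ωb 2) = 0 := by
  rw [pm01]; simp [Matrix.det_succ_row_zero, Fin.sum_univ_succ]

lemma v11_10 : φ (![1,2,4,5]) (ω 1 * ω 2 * ωb 0 * ωb 2) = 0 := by
  rw [pm10]; simp [Matrix.det_succ_row_zero, Fin.sum_univ_succ]

lemma v11_11 : φ (![1,2,4,5]) (ω 1 * ω 2 * ωb 1 * ωb 2) = 1 := by
  rw [pm11]; simp [Matrix.det_succ_row_zero, Fin.sum_univ_succ]


set_option maxHeartbeats 1600000 in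
theorem gamma_nonzero_family_I
    (ρ lam : ℝ) (D : ℂ) (hρ : ρ = 0 ∨ ρ = 1) (hlam : 0 ≤ lam) (hlam0 : lam ≠ 0)
    (d : E →ₗ[ℂ] E) (hd : IsAntider d)
    (h1 : d (ω 0) = 0) (h2 : d (ω 1) = 0)
    (h3 : d (ω 2) = (ρ : ℂ) • (ω 0 * ω 1) + ω 0 * ωb 0
      + (lam : ℂ) • (ω 0 * ωb 1) + D • (ω 1 * ωb 1))
    (h1c : d (ωb 0) = 0) (h2c : d (ωb 1) = 0)
    (h3c : d (ωb 2) = (ρ : ℂ) • (ωb 0 * ωb 1) + ωb 0 * ω 0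
      + (lam : ℂ) • (ωb 0 * ω 1) + (starRingEnd ℂ D) • (ωb 1 * ω 1))
    -- the balanced metric 2F = i(ω^{1 1̄} + s²ω^{2 2̄} + t²ω^{3 3̄}) + u ω^{1 2̄} − ū ω^{2 1̄}
    (s t : ℝ) (hs : s ≠ 0) (ht : t ≠ 0) (u : ℂ)
    (F : E)
    (hF : (2 : ℂ) • F = Complex.I • ((ω 0 * ωb 0) + (s ^ 2 : ℂ) • (ω 1 * ωb 1)
      + (t ^ 2 : ℂ) • (ω 2 * ωb 2)) + u • (ω 0 * ωb 1) - (starRingEnd ℂ u) • (ω 1 * ωb 0))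
    (hmetric : ‖u‖ ^ 2 < s ^ 2)
    (hbalanced : (s ^ 2 : ℂ) + D = Complex.I * (lam : ℂ) * (starRingEnd ℂ u))
    -- the complex structure admits balanced metrics: |D| + Re D ≠ λ²/2
    (hD : ‖D‖ + D.re ≠ lam ^ 2 / 2) :
    ((lam * s ^ 2 - 2 * (D * u).im : ℝ) : ℂ) •
        (ω 0 * ω 2 * ωb 1 * ωb 2 + ω 1 * ω 2 * ωb 0 * ωb 2
          + (lam : ℂ) • (ω 1 * ω 2 * ωb 1 * ωb 2)) -
      ((lam - 2 * u.im : ℝ) : ℂ) •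
        ((lam : ℂ) • (ω 0 * ω 2 * ωb 0 * ωb 2)
          + (starRingEnd ℂ D) • (ω 0 * ω 2 * ωb 1 * ωb 2)
          + D • (ω 1 * ω 2 * ωb 0 * ωb 2)) ≠ 0 := by
  intro hγ
  have key : ∀ S : Fin 4 → Fin 6, φ S (((lam * s ^ 2 - 2 * (D * u).im : ℝ) : ℂ) •
        (ω 0 * ω 2 * ωb 1 * ωb 2 + ω 1 * ω 2 * ωb 0 * ωb 2
          + (lam : ℂ) • (ω 1 * ω 2 * ωb 1 * ωb 2)) -
      ((lam - 2 * u.im : ℝ) : ℂ) •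
        ((lam : ℂ) • (ω 0 * ω 2 * ωb 0 * ωb 2)
          + (starRingEnd ℂ D) • (ω 0 * ω 2 * ωb 1 * ωb 2)
          + D • (ω 1 * ω 2 * ωb 0 * ωb 2))) = 0 := fun S => by rw [hγ, map_zero]
  have E0 := key ![0,2,3,5]
  have E3 := key ![1,2,4,5]
  simp only [map_sub, map_add, map_smul, v00_00, v00_01, v00_10, v00_11,
    v11_00, v11_01, v11_10, v11_11, smul_eq_mul, mul_zero, mul_one, add_zero, zero_add,
    sub_eq_zero] at E0 E3
  -- extract real equations
  have hb : lam - 2 * u.im = 0 := by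
    have : ((lam - 2 * u.im : ℝ) : ℂ) * (lam : ℂ) = 0 := by linear_combination -E0
    rcases mul_eq_zero.mp this with h | h
    · exact_mod_cast h
    · exact absurd (by exact_mod_cast h) hlam0
  have ha : lam * s ^ 2 - 2 * (D * u).im = 0 := by
    have : ((lam * s ^ 2 - 2 * (D * u).im : ℝ) : ℂ) * (lam : ℂ) = 0 := by linear_combination E3
    rcases mul_eq_zero.mp this with h | h
    · exact_mod_cast h
    · exact absurd (by exact_mod_cast h) hlam0
  rw [Complex.ext_iff] at hbalanced
  obtain ⟨hre, him⟩ := hbalanced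
  simp [Complex.mul_re, Complex.mul_im, ← Complex.ofReal_pow] at hre him
  rw [Complex.mul_im] at ha
  -- now real arithmetic
  have hq : u.im = lam / 2 := by linarith
  rw [hq] at ha hre
  have hs2 : lam * s ^ 2 = lam * (D.re + 2 * u.re ^ 2) := by
    linear_combination ha + 2 * u.re * him
  have hs2' : s ^ 2 = D.re + 2 * u.re ^ 2 := mul_left_cancel₀ hlam0 hs2
  have hA2 : (‖D‖) ^ 2 = (s ^ 2) ^ 2 := by
    rw [Complex.sq_norm, Complex.normSq_apply]
    linear_combination (D.im + lam*u.re)*him - 2*u.re^2*hre - (s^2 + D.re)*hs2'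
  have hspos : (0:ℝ) < s ^ 2 := by positivity
  have habs : ‖D‖ = s ^ 2 := by
    have h4 : (‖D‖ - s ^ 2) * (‖D‖ + s ^ 2) = 0 := by linear_combination hA2
    rcases mul_eq_zero.mp h4 with h | h
    · linarith
    · nlinarith [norm_nonneg D]
  apply hD
  rw [habs]
  linarith [hre]

end
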